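/- arXiv:2103.01447 — 2 statements merged into one kernel-verified Lean document; each statement's English description precedes it below -/
import Mathlib

section
/- Fix x, x' ∈ ℝ^d, v' ∈ ℝ^d, y_1, …, y_n ∈ ℝ^d, λ ∈ ℝ, 1 ≤ b ≤ n, η > 0, β > 0 and constants γ ≥ 0, α ≥ 0. For a size-b subset I ⊆ {1,…,n}, let v(I) be the ZeroSARAH gradient estimator, x⁺(I) := x − η v(I), and y_j⁺(I) := ∇f_j(x) if j ∈ I, y_j⁺(I) := y_j otherwise. Then, with f* any lower bound of f, E_I[ f(x⁺(I)) − f* + (γ − η/2)‖v(I) − ∇f(x)‖² + (1/(2η) − L/2)‖x⁺(I) − x‖² + α·(1/n)∑_{j=1}^n ‖∇f_j(x) − y_j⁺(I)‖² ] ≤ f(x) − f* − (η/2)‖∇f(x)‖² + γ(1−λ)²‖v' − ∇f(x')‖² + (2γL²/b + α(1 − b/n)(1 + 1/β)L²)‖x − x'‖² + (2γλ²/b + α(1 − b/n)(1 + β))·(1/n)∑_{j=1}^n ‖∇f_j(x') − y_j‖². -/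
open Finset

variable {α : Type*} [DecidableEq α]

lemma count_mem_powersetCard (s : Finset α) (b : ℕ) (hb : 1 ≤ b) {i : α} (hi : i ∈ s) :
    ((s.powersetCard b).filter (fun I => i ∈ I)).card = (s.card - 1).choose (b - 1) := by
  rw [← Finset.card_erase_of_mem hi, ← Finset.card_powersetCard (b-1) (s.erase i)]
  refine Finset.card_bij' (fun I _ => I.erase i) (fun J _ => insert i J) ?_ ?_ ?_ ?_
  · rintro I hI
    simp only [mem_filter, mem_powersetCard] at hI
    simp only [mem_powersetCard]
    exact ⟨Finset.erase_subset_erase _ hI.1.1, by rw [Finset.card_erase_of_mem hI.2, hI.1.2]⟩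
  · rintro J hJ
    simp only [mem_powersetCard] at hJ
    have hiJ : i ∉ J := fun h => (Finset.mem_erase.mp (hJ.1 h)).1 rfl
    simp only [mem_filter, mem_powersetCard]
    refine ⟨⟨?_, ?_⟩, Finset.mem_insert_self _ _⟩
    · exact Finset.insert_subset hi (hJ.1.trans (Finset.erase_subset _ _))
    · rw [Finset.card_insert_of_notMem hiJ, hJ.2]; omega
  · rintro I hI
    simp only [mem_filter] at hI
    exact Finset.insert_erase hI.2
  · rintro J hJ
    simp only [mem_powersetCard] at hJ
    have hiJ : i ∉ J := fun h => (Finset.mem_erase.mp (hJ.1 h)).1 rfl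
    exact Finset.erase_insert hiJ

lemma count_pair_powersetCard (s : Finset α) (b : ℕ) (hb : 2 ≤ b) {i j : α}
    (hij : i ≠ j) (hi : i ∈ s) (hj : j ∈ s) :
    ((s.powersetCard b).filter (fun I => i ∈ I ∧ j ∈ I)).card = (s.card - 2).choose (b - 2) := by
  have hcardee : ((s.erase i).erase j).card = s.card - 2 := by
    rw [Finset.card_erase_of_mem (Finset.mem_erase.mpr ⟨hij.symm, hj⟩),
      Finset.card_erase_of_mem hi]; omega
  rw [← hcardee, ← Finset.card_powersetCard (b-2) ((s.erase i).erase j)]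
  refine Finset.card_bij' (fun I _ => (I.erase i).erase j) (fun J _ => insert i (insert j J))
    ?_ ?_ ?_ ?_
  · rintro I hI
    simp only [mem_filter, mem_powersetCard] at hI
    simp only [mem_powersetCard]
    refine ⟨Finset.erase_subset_erase _ (Finset.erase_subset_erase _ hI.1.1), ?_⟩
    rw [Finset.card_erase_of_mem (Finset.mem_erase.mpr ⟨hij.symm, hI.2.2⟩),
      Finset.card_erase_of_mem hI.2.1, hI.1.2]
    omega
  · rintro J hJ
    simp only [mem_powersetCard] at hJ
    have hjJ : j ∉ J := fun h => (Finset.mem_erase.mp (hJ.1 h)).1 rfl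
    have hiJ : i ∉ insert j J := by
      intro h
      rcases Finset.mem_insert.mp h with h | h
      · exact hij h
      · exact (Finset.mem_erase.mp ((Finset.erase_subset _ _) (hJ.1 h))).1 rfl
    simp only [mem_filter, mem_powersetCard]
    refine ⟨⟨?_, ?_⟩, Finset.mem_insert_self _ _, ?_⟩
    · refine Finset.insert_subset hi (Finset.insert_subset hj ?_)
      exact hJ.1.trans ((Finset.erase_subset _ _).trans (Finset.erase_subset _ _))
    · rw [Finset.card_insert_of_notMem hiJ, Finset.card_insert_of_notMem hjJ, hJ.2]; omega
    · exact Finset.mem_insert_of_mem (Finset.mem_insert_self _ _)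
  · rintro I hI
    simp only [mem_filter] at hI
    show insert i (insert j ((I.erase i).erase j)) = I
    rw [Finset.insert_erase (Finset.mem_erase.mpr ⟨hij.symm, hI.2.2⟩), Finset.insert_erase hI.2.1]
  · rintro J hJ
    simp only [mem_powersetCard] at hJ
    have hjJ : j ∉ J := fun h => (Finset.mem_erase.mp (hJ.1 h)).1 rfl
    have hiJ : i ∉ insert j J := by
      intro h
      rcases Finset.mem_insert.mp h with h | h
      · exact hij h
      · exact (Finset.mem_erase.mp ((Finset.erase_subset _ _) (hJ.1 h))).1 rfl
    show ((insert i (insert j J)).erase i).erase j = J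
    rw [Finset.erase_insert hiJ, Finset.erase_insert hjJ]

lemma sum_indicator_subset'' {M : Type*} [AddCommMonoid M] {I s : Finset α} (hIs : I ⊆ s)
    (F : α → M) : ∑ i ∈ I, F i = ∑ i ∈ s, if i ∈ I then F i else 0 := by
  rw [← Finset.sum_filter, Finset.filter_mem_eq_inter, Finset.inter_eq_right.mpr hIs]

lemma sum_powersetCard_sum' {M : Type*} [AddCommMonoid M] (s : Finset α) (b : ℕ) (F : α → M) :
    ∑ I ∈ s.powersetCard b, ∑ i ∈ I, F i
      = ∑ i ∈ s, ((s.powersetCard b).filter (fun I => i ∈ I)).card • F i := by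
  rw [Finset.sum_congr rfl (fun I hI =>
    sum_indicator_subset'' (Finset.mem_powersetCard.mp hI).1 F), Finset.sum_comm]
  refine Finset.sum_congr rfl fun i _ => ?_
  rw [← Finset.sum_filter, Finset.sum_const]

lemma sum_powersetCard_pair (s : Finset α) (b : ℕ) (h : α → α → ℝ) :
    ∑ I ∈ s.powersetCard b, ∑ i ∈ I, ∑ j ∈ I, h i j
      = ∑ i ∈ s, ∑ j ∈ s,
          (((s.powersetCard b).filter (fun I => i ∈ I ∧ j ∈ I)).card : ℝ) * h i j := by
  have key : ∀ I ∈ s.powersetCard b, ∑ i ∈ I, ∑ j ∈ I, h i j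
      = ∑ i ∈ s, ∑ j ∈ s, if i ∈ I ∧ j ∈ I then h i j else 0 := by
    intro I hI
    have hIs := (Finset.mem_powersetCard.mp hI).1
    rw [sum_indicator_subset'' hIs]
    refine Finset.sum_congr rfl fun i _ => ?_
    by_cases hi : i ∈ I
    · simp only [hi, if_true, true_and]
      exact sum_indicator_subset'' hIs _
    · simp [hi]
  rw [Finset.sum_congr rfl key, Finset.sum_comm]
  refine Finset.sum_congr rfl fun i _ => ?_
  rw [Finset.sum_comm]
  refine Finset.sum_congr rfl fun j _ => ?_
  rw [← Finset.sum_filter, Finset.sum_const, nsmul_eq_mul]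

open RealInnerProductSpace in
lemma var_bound {E : Type*} [NormedAddCommGroup E] [InnerProductSpace ℝ E]
    (s : Finset α) (b : ℕ) (hb : 1 ≤ b) (u : α → E) (hu : ∑ i ∈ s, u i = 0) :
    ∑ I ∈ s.powersetCard b, ‖∑ i ∈ I, u i‖ ^ 2
      ≤ ((s.card - 1).choose (b - 1) : ℝ) * ∑ i ∈ s, ‖u i‖ ^ 2 := by
  classical
  obtain ⟨M, hM⟩ : ∃ M : ℕ, ∀ i ∈ s, ∀ j ∈ s, i ≠ j →
      ((s.powersetCard b).filter (fun I => i ∈ I ∧ j ∈ I)).card = M := by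
    rcases Nat.lt_or_ge b 2 with h2 | h2
    · refine ⟨0, fun i hi j hj hij => ?_⟩
      rw [Finset.card_eq_zero, Finset.filter_eq_empty_iff]
      rintro I hI ⟨hiI, hjI⟩
      have hc : I.card = b := (Finset.mem_powersetCard.mp hI).2
      have hb1 : I.card ≤ 1 := by omega
      exact hij (Finset.card_le_one.mp hb1 i hiI j hjI)
    · exact ⟨(s.card - 2).choose (b - 2),
        fun i hi j hj hij => count_pair_powersetCard s b h2 hij hi hj⟩
  have hdiag : ∀ i ∈ s,
      ((s.powersetCard b).filter (fun I => i ∈ I ∧ i ∈ I)).card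
        = (s.card - 1).choose (b - 1) := by
    intro i hi
    simp only [and_self]
    exact count_mem_powersetCard s b hb hi
  have hoff : ∀ i ∈ s, ∑ j ∈ s.erase i, ⟪u i, u j⟫ = -‖u i‖ ^ 2 := by
    intro i hi
    have h2 : ∑ j ∈ s.erase i, ⟪u i, u j⟫ + ⟪u i, u i⟫ = ∑ j ∈ s, ⟪u i, u j⟫ :=
      Finset.sum_erase_add s _ hi
    have h3 : ∑ j ∈ s, ⟪u i, u j⟫ = 0 := by rw [← inner_sum, hu, inner_zero_right]
    rw [h3, real_inner_self_eq_norm_sq] at h2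
    linarith
  have expand : ∀ I : Finset α, ‖∑ i ∈ I, u i‖ ^ 2 = ∑ i ∈ I, ∑ j ∈ I, ⟪u i, u j⟫ := by
    intro I
    rw [← real_inner_self_eq_norm_sq, sum_inner]
    exact Finset.sum_congr rfl fun i _ => inner_sum _ _ _
  have S0 : (0:ℝ) ≤ ∑ i ∈ s, ‖u i‖ ^ 2 := Finset.sum_nonneg fun i _ => by positivity
  calc ∑ I ∈ s.powersetCard b, ‖∑ i ∈ I, u i‖ ^ 2
      = ∑ i ∈ s, ∑ j ∈ s,
          (((s.powersetCard b).filter (fun I => i ∈ I ∧ j ∈ I)).card : ℝ) * ⟪u i, u j⟫ := by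
        rw [← sum_powersetCard_pair]
        exact Finset.sum_congr rfl fun I _ => expand I
    _ = ∑ i ∈ s, (((s.card - 1).choose (b - 1) : ℝ) * ‖u i‖ ^ 2
          + (M : ℝ) * ∑ j ∈ s.erase i, ⟪u i, u j⟫) := by
        refine Finset.sum_congr rfl fun i hi => ?_
        rw [← Finset.sum_erase_add _ _ hi, hdiag i hi, real_inner_self_eq_norm_sq,
          Finset.mul_sum]
        rw [Finset.sum_congr rfl (fun j hj => by
          rw [hM i hi j (Finset.mem_of_mem_erase hj) (Finset.ne_of_mem_erase hj).symm])]
        ring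
    _ = ((s.card - 1).choose (b - 1) : ℝ) * ∑ i ∈ s, ‖u i‖ ^ 2
          + (M : ℝ) * ∑ i ∈ s, ∑ j ∈ s.erase i, ⟪u i, u j⟫ := by
        rw [Finset.sum_add_distrib, ← Finset.mul_sum, ← Finset.mul_sum]
    _ = ((s.card - 1).choose (b - 1) : ℝ) * ∑ i ∈ s, ‖u i‖ ^ 2
          - (M : ℝ) * ∑ i ∈ s, ‖u i‖ ^ 2 := by
        rw [Finset.sum_congr rfl hoff, Finset.sum_neg_distrib]
        ring
    _ ≤ ((s.card - 1).choose (b - 1) : ℝ) * ∑ i ∈ s, ‖u i‖ ^ 2 := by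
        nlinarith [Nat.cast_nonneg (α := ℝ) M]
open RealInnerProductSpace MeasureTheory


lemma grad_inner_eq {E : Type*} [NormedAddCommGroup E] [InnerProductSpace ℝ E] [CompleteSpace E]
    (φ : E → ℝ) (z w : E) : ⟪gradient φ z, w⟫ = fderiv ℝ φ z w := by
  rw [gradient, InnerProductSpace.toDual_symm_apply]

lemma descent_lemma {E : Type*} [NormedAddCommGroup E] [InnerProductSpace ℝ E] [CompleteSpace E]
    (φ : E → ℝ) (hdiff : Differentiable ℝ φ) {L : ℝ} (hL : 0 ≤ L)
    (hlip : ∀ z w, ‖gradient φ z - gradient φ w‖ ≤ L * ‖z - w‖) (x v : E) :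
    φ (x + v) ≤ φ x + ⟪gradient φ x, v⟫ + L / 2 * ‖v‖ ^ 2 := by
  set D : ℝ → ℝ := fun t => ⟪gradient φ (x + t • v), v⟫ with hD
  have hc : ∀ t : ℝ, HasDerivAt (fun s : ℝ => x + s • v) v t := by
    intro t
    simpa using ((hasDerivAt_id t).smul_const v).const_add x
  have hψ : ∀ t : ℝ, HasDerivAt (fun s : ℝ => φ (x + s • v)) (D t) t := by
    intro t
    have h1 := (hdiff (x + t • v)).hasFDerivAt.comp_hasDerivAt t (hc t)
    have h2 : D t = fderiv ℝ φ (x + t • v) v := grad_inner_eq _ _ _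
    rw [h2]; exact h1
  have hlips : LipschitzWith (Real.toNNReal L) (gradient φ) := by
    refine LipschitzWith.of_dist_le_mul fun z w => ?_
    rw [dist_eq_norm, dist_eq_norm, Real.coe_toNNReal L hL]
    exact hlip z w
  have hDc : Continuous D := by
    exact (hlips.continuous.comp (by continuity)).inner continuous_const
  have hint : IntervalIntegrable D volume 0 1 := hDc.intervalIntegrable 0 1
  have hint2 : IntervalIntegrable (fun t : ℝ => D 0 + L * ‖v‖ ^ 2 * t) volume 0 1 :=
    (continuous_const.add (continuous_const.mul continuous_id)).intervalIntegrable 0 1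
  have heq : φ (x + v) - φ x = ∫ t in (0:ℝ)..1, D t := by
    have h2 := intervalIntegral.integral_eq_sub_of_hasDerivAt
      (f := fun s : ℝ => φ (x + s • v)) (f' := D) (fun t _ => hψ t) hint
    simpa using h2.symm
  have hmono : ∀ t ∈ Set.Icc (0:ℝ) 1, D t ≤ D 0 + L * ‖v‖ ^ 2 * t := by
    intro t ht
    have h1 : D t - D 0 = ⟪gradient φ (x + t • v) - gradient φ x, v⟫ := by
      simp [hD, inner_sub_left]
    have h2 : ⟪gradient φ (x + t • v) - gradient φ x, v⟫
        ≤ ‖gradient φ (x + t • v) - gradient φ x‖ * ‖v‖ := real_inner_le_norm _ _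
    have h3 : ‖gradient φ (x + t • v) - gradient φ x‖ ≤ L * (t * ‖v‖) := by
      have := hlip (x + t • v) x
      rwa [add_sub_cancel_left, norm_smul, Real.norm_eq_abs, abs_of_nonneg ht.1] at this
    have h4 : ‖gradient φ (x + t • v) - gradient φ x‖ * ‖v‖ ≤ L * (t * ‖v‖) * ‖v‖ :=
      mul_le_mul_of_nonneg_right h3 (norm_nonneg v)
    nlinarith [norm_nonneg v]
  have hle : (∫ t in (0:ℝ)..1, D t) ≤ ∫ t in (0:ℝ)..1, (D 0 + L * ‖v‖ ^ 2 * t) :=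
    intervalIntegral.integral_mono_on zero_le_one hint hint2 hmono
  have hval : (∫ t in (0:ℝ)..1, (D 0 + L * ‖v‖ ^ 2 * t)) = D 0 + L / 2 * ‖v‖ ^ 2 := by
    have hint3 : IntervalIntegrable (fun t : ℝ => L * ‖v‖ ^ 2 * t) volume 0 1 := by
      apply Continuous.intervalIntegrable; continuity
    rw [intervalIntegral.integral_add intervalIntegrable_const hint3,
      intervalIntegral.integral_const, intervalIntegral.integral_const_mul,
      integral_id]
    simp
    ring
  have hD0 : D 0 = ⟪gradient φ x, v⟫ := by simp [hD]
  rw [hval, hD0] at hle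
  linarith [heq ▸ hle]
open RealInnerProductSpace

noncomputable section

/-- The average function `f = (1/n) ∑ᵢ fᵢ`. -/
noncomputable def avgF {d n : ℕ} (f : Fin n → EuclideanSpace ℝ (Fin d) → ℝ) :
    EuclideanSpace ℝ (Fin d) → ℝ :=
  fun z => (n : ℝ)⁻¹ * ∑ i, f i z

lemma gradient_avgF {d n : ℕ} (f : Fin n → EuclideanSpace ℝ (Fin d) → ℝ)
    (hdiff : ∀ i, Differentiable ℝ (f i)) (z : EuclideanSpace ℝ (Fin d)) :
    gradient (avgF f) z = (n : ℝ)⁻¹ • ∑ i, gradient (f i) z := by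
  have h1 : fderiv ℝ (fun w => ∑ i, f i w) z = ∑ i, fderiv ℝ (f i) z :=
    fderiv_fun_sum (fun i _ => (hdiff i z))
  have hds : DifferentiableAt ℝ (fun w => ∑ i, f i w) z :=
    DifferentiableAt.fun_sum (fun i _ => hdiff i z)
  have h2 : fderiv ℝ (avgF f) z = (n : ℝ)⁻¹ • ∑ i, fderiv ℝ (f i) z := by
    unfold avgF
    rw [fderiv_const_mul hds, h1]
  simp only [gradient, h2, _root_.map_smul, map_sum]

lemma diff_avgF {d n : ℕ} (f : Fin n → EuclideanSpace ℝ (Fin d) → ℝ)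
    (hdiff : ∀ i, Differentiable ℝ (f i)) : Differentiable ℝ (avgF f) := by
  unfold avgF
  exact Differentiable.const_mul (Differentiable.fun_sum (fun i _ => hdiff i)) _

lemma lip_avgF {d n : ℕ} (hn : 1 ≤ n) {L : ℝ} (hL : 0 ≤ L)
    (f : Fin n → EuclideanSpace ℝ (Fin d) → ℝ)
    (hdiff : ∀ i, Differentiable ℝ (f i))
    (hsmooth : ∀ i (x y : EuclideanSpace ℝ (Fin d)),
      ‖gradient (f i) x - gradient (f i) y‖ ≤ L * ‖x - y‖)
    (z w : EuclideanSpace ℝ (Fin d)) :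
    ‖gradient (avgF f) z - gradient (avgF f) w‖ ≤ L * ‖z - w‖ := by
  have hn0 : (0:ℝ) < (n:ℝ) := by exact_mod_cast hn
  rw [gradient_avgF f hdiff, gradient_avgF f hdiff, ← smul_sub, ← Finset.sum_sub_distrib]
  rw [norm_smul, Real.norm_eq_abs, abs_of_nonneg (by positivity)]
  have h1 : ‖∑ i, (gradient (f i) z - gradient (f i) w)‖ ≤ (n:ℝ) * (L * ‖z - w‖) := by
    calc ‖∑ i, (gradient (f i) z - gradient (f i) w)‖
        ≤ ∑ i, ‖gradient (f i) z - gradient (f i) w‖ := norm_sum_le _ _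
      _ ≤ ∑ _i : Fin n, L * ‖z - w‖ := Finset.sum_le_sum fun i _ => hsmooth i z w
      _ = (n:ℝ) * (L * ‖z - w‖) := by simp [Finset.sum_const, mul_comm]
  calc (n:ℝ)⁻¹ * ‖∑ i, (gradient (f i) z - gradient (f i) w)‖
      ≤ (n:ℝ)⁻¹ * ((n:ℝ) * (L * ‖z - w‖)) := by
        exact mul_le_mul_of_nonneg_left h1 (by positivity)
    _ = L * ‖z - w‖ := by field_simp

/-- Expectation (average) of a real-valued function of a uniformly random
size-`b` subset of `{1,…,n}`. -/
noncomputable def expSub (n b : ℕ) (g : Finset (Fin n) → ℝ) : ℝ :=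
  (∑ I ∈ Finset.powersetCard b (Finset.univ : Finset (Fin n)), g I) /
    ((Finset.powersetCard b (Finset.univ : Finset (Fin n))).card : ℝ)

/-- The ZeroSARAH gradient estimator. -/
noncomputable def zsEst {d n : ℕ} (f : Fin n → EuclideanSpace ℝ (Fin d) → ℝ)
    (x x' v' : EuclideanSpace ℝ (Fin d)) (y : Fin n → EuclideanSpace ℝ (Fin d))
    (lam : ℝ) (b : ℕ) (I : Finset (Fin n)) : EuclideanSpace ℝ (Fin d) :=
  (b : ℝ)⁻¹ • ∑ i ∈ I, (gradient (f i) x - gradient (f i) x')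
    + (1 - lam) • v'
    + lam • ((b : ℝ)⁻¹ • ∑ i ∈ I, (gradient (f i) x' - y i)
        + (n : ℝ)⁻¹ • ∑ j, y j)

set_option maxHeartbeats 1000000 in
/-- One-step Lyapunov (potential) inequality for ZeroSARAH. -/
theorem zerosarah_one_step_recursion {d n : ℕ} (hd : 1 ≤ d) (hn : 1 ≤ n)
    (L : ℝ) (hL : 0 < L)
    (f : Fin n → EuclideanSpace ℝ (Fin d) → ℝ)
    (hdiff : ∀ i, Differentiable ℝ (f i))
    (hsmooth : ∀ i (x y : EuclideanSpace ℝ (Fin d)),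
      ‖gradient (f i) x - gradient (f i) y‖ ≤ L * ‖x - y‖)
    (x x' v' : EuclideanSpace ℝ (Fin d)) (y : Fin n → EuclideanSpace ℝ (Fin d))
    (lam : ℝ) (b : ℕ) (hb1 : 1 ≤ b) (hbn : b ≤ n)
    (η : ℝ) (hη : 0 < η) (β : ℝ) (hβ : 0 < β)
    (γ α : ℝ) (hγ : 0 ≤ γ) (hα : 0 ≤ α)
    (fstar : ℝ) (hfstar : ∀ z, fstar ≤ avgF f z) :
    expSub n b (fun I =>
        avgF f (x - η • zsEst f x x' v' y lam b I) - fstar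
        + (γ - η / 2) * ‖zsEst f x x' v' y lam b I - gradient (avgF f) x‖ ^ 2
        + (1 / (2 * η) - L / 2) * ‖(x - η • zsEst f x x' v' y lam b I) - x‖ ^ 2
        + α * ((n : ℝ)⁻¹ *
            ∑ j, ‖gradient (f j) x - (if j ∈ I then gradient (f j) x else y j)‖ ^ 2))
      ≤ avgF f x - fstar - η / 2 * ‖gradient (avgF f) x‖ ^ 2
        + γ * (1 - lam) ^ 2 * ‖v' - gradient (avgF f) x'‖ ^ 2
        + (2 * γ * L ^ 2 / (b : ℝ)
            + α * (1 - (b : ℝ) / n) * (1 + 1 / β) * L ^ 2) * ‖x - x'‖ ^ 2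
        + (2 * γ * lam ^ 2 / (b : ℝ)
            + α * (1 - (b : ℝ) / n) * (1 + β)) *
            ((n : ℝ)⁻¹ * ∑ j, ‖gradient (f j) x' - y j‖ ^ 2) := by
  classical
  have hL0 : (0:ℝ) ≤ L := hL.le
  have hn0 : (0:ℝ) < (n:ℝ) := by exact_mod_cast hn
  have hb0 : (0:ℝ) < (b:ℝ) := by exact_mod_cast hb1
  rw [expSub]
  set P : Finset (Finset (Fin n)) := Finset.powersetCard b Finset.univ with hP
  have hNnat : P.card = n.choose b := by
    rw [hP, Finset.card_powersetCard, Finset.card_univ, Fintype.card_fin]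
  have hNpos : (0:ℝ) < (P.card:ℝ) := by
    have := Nat.choose_pos hbn
    rw [hNnat]; exact_mod_cast this
  set Gx := gradient (avgF f) x with hGx
  set Gx' := gradient (avgF f) x' with hGx'
  set c : Fin n → EuclideanSpace ℝ (Fin d) := fun j => gradient (f j) x' - y j with hc
  set w : Fin n → EuclideanSpace ℝ (Fin d) := fun i =>
    (gradient (f i) x - gradient (f i) x') + lam • c i with hw
  set wbar : EuclideanSpace ℝ (Fin d) := (n:ℝ)⁻¹ • ∑ i, w i with hwbar
  set u : Fin n → EuclideanSpace ℝ (Fin d) := fun i => w i - wbar with hu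
  set Z : EuclideanSpace ℝ (Fin d) := (1 - lam) • (v' - Gx') with hZ
  set C1 : ℕ := (n-1).choose (b-1) with hC1
  have hnat : n * C1 = b * n.choose b := by
    obtain ⟨m, rfl⟩ : ∃ m, n = m + 1 := ⟨n - 1, by omega⟩
    obtain ⟨k, rfl⟩ : ∃ k, b = k + 1 := ⟨b - 1, by omega⟩
    simp only [hC1, Nat.add_sub_cancel]
    simpa [Nat.succ_eq_add_one, mul_comm] using Nat.add_one_mul_choose_eq m k
  have hkey : (n:ℝ) * (C1:ℝ) = (b:ℝ) * (P.card:ℝ) := by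
    rw [hNnat]; exact_mod_cast hnat
  have hsw : ∑ i, w i = (n:ℝ) • wbar := by
    rw [hwbar, smul_smul, mul_inv_cancel₀ hn0.ne', one_smul]
  have hsumu : ∑ i, u i = 0 := by
    simp only [hu]
    rw [Finset.sum_sub_distrib, Finset.sum_const, Finset.card_univ, Fintype.card_fin,
      ← Nat.cast_smul_eq_nsmul ℝ, ← hsw, sub_self]
  have hdecomp : ∀ I ∈ P, zsEst f x x' v' y lam b I - Gx
      = (b:ℝ)⁻¹ • (∑ i ∈ I, u i) + Z := by
    intro I hI
    have hcard : I.card = b := (Finset.mem_powersetCard.mp hI).2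
    have e1 : ∑ i ∈ I, u i = ∑ i ∈ I, w i - (b:ℝ) • wbar := by
      simp only [hu]
      rw [Finset.sum_sub_distrib, Finset.sum_const, hcard, ← Nat.cast_smul_eq_nsmul ℝ]
    have e2 : ∑ i ∈ I, w i
        = ∑ i ∈ I, (gradient (f i) x - gradient (f i) x') + lam • ∑ i ∈ I, c i := by
      simp only [hw]
      rw [Finset.sum_add_distrib, Finset.smul_sum]
    have e3 : wbar = (Gx - Gx') + lam • (Gx' - (n:ℝ)⁻¹ • ∑ j, y j) := by
      rw [hwbar, hGx, hGx', gradient_avgF f hdiff, gradient_avgF f hdiff]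
      simp only [hw, hc]
      rw [Finset.sum_add_distrib, Finset.sum_sub_distrib, ← Finset.smul_sum,
        Finset.sum_sub_distrib]
      module
    rw [zsEst, e1, e2, e3, hZ, hc]
    match_scalars <;> (field_simp; try ring)
  have hpernorm : ∀ i, ‖w i‖^2 ≤ 2*L^2*‖x-x'‖^2 + 2*lam^2*‖c i‖^2 := by
    intro i
    have h1 : ‖w i‖ ≤ ‖gradient (f i) x - gradient (f i) x'‖ + |lam| * ‖c i‖ := by
      simp only [hw]
      calc ‖(gradient (f i) x - gradient (f i) x') + lam • c i‖
          ≤ ‖gradient (f i) x - gradient (f i) x'‖ + ‖lam • c i‖ := norm_add_le _ _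
        _ = ‖gradient (f i) x - gradient (f i) x'‖ + |lam| * ‖c i‖ := by
            rw [norm_smul, Real.norm_eq_abs]
    have h2 : ‖gradient (f i) x - gradient (f i) x'‖ ≤ L * ‖x - x'‖ := hsmooth i x x'
    have h3 : (0:ℝ) ≤ ‖gradient (f i) x - gradient (f i) x'‖ := norm_nonneg _
    have h4 : (0:ℝ) ≤ |lam| * ‖c i‖ := by positivity
    have hs : ‖w i‖ ≤ L*‖x-x'‖ + |lam| * ‖c i‖ := by linarith
    have h6 := pow_le_pow_left₀ (norm_nonneg (w i)) hs 2
    have h7 : (L*‖x-x'‖ + |lam| * ‖c i‖)^2 ≤ 2*(L*‖x-x'‖)^2 + 2*(|lam| * ‖c i‖)^2 := by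
      nlinarith [sq_nonneg (L*‖x-x'‖ - |lam| * ‖c i‖)]
    calc ‖w i‖^2 ≤ (L*‖x-x'‖ + |lam| * ‖c i‖)^2 := h6
      _ ≤ 2*(L*‖x-x'‖)^2 + 2*(|lam| * ‖c i‖)^2 := h7
      _ = 2*L^2*‖x-x'‖^2 + 2*lam^2*‖c i‖^2 := by rw [mul_pow, mul_pow, sq_abs]; ring
  have hsumu_le : ∑ i, ‖u i‖^2 ≤ ∑ i, ‖w i‖^2 := by
    have e : ∀ i : Fin n, ‖u i‖^2 = ‖w i‖^2 - 2*⟪w i, wbar⟫ + ‖wbar‖^2 := by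
      intro i
      simp only [hu]
      rw [norm_sub_sq_real]
    rw [Finset.sum_congr rfl (fun i _ => e i)]
    rw [Finset.sum_add_distrib, Finset.sum_sub_distrib, Finset.sum_const,
      Finset.card_univ, Fintype.card_fin]
    have hin : ∑ i, 2*⟪w i, wbar⟫ = 2*((n:ℝ)*‖wbar‖^2) := by
      rw [← Finset.mul_sum, ← sum_inner, hsw, real_inner_smul_left,
        real_inner_self_eq_norm_sq]
    rw [hin]
    have : (0:ℝ) ≤ (n:ℝ) * ‖wbar‖^2 := by positivity
    have hns : (n:ℕ) • ‖wbar‖^2 = (n:ℝ) * ‖wbar‖^2 := by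
      rw [nsmul_eq_mul]
    rw [hns]
    linarith

  have hsumw : ∑ i, ‖w i‖^2 ≤ (n:ℝ)*(2*L^2*‖x-x'‖^2) + 2*lam^2 * ∑ j, ‖c j‖^2 := by
    calc ∑ i, ‖w i‖^2 ≤ ∑ i, (2*L^2*‖x-x'‖^2 + 2*lam^2*‖c i‖^2) :=
          Finset.sum_le_sum (fun i _ => hpernorm i)
      _ = (n:ℝ)*(2*L^2*‖x-x'‖^2) + 2*lam^2 * ∑ j, ‖c j‖^2 := by
          rw [Finset.sum_add_distrib, Finset.sum_const, Finset.card_univ, Fintype.card_fin,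
            nsmul_eq_mul, ← Finset.mul_sum]
  have hvar := var_bound (Finset.univ : Finset (Fin n)) b hb1 u hsumu
  rw [Finset.card_univ, Fintype.card_fin, ← hC1] at hvar
  have hZsq : ‖Z‖^2 = (1-lam)^2 * ‖v' - Gx'‖^2 := by
    rw [hZ, norm_smul, mul_pow, Real.norm_eq_abs, sq_abs]
  have hsum0 : ∑ I ∈ P, (∑ i ∈ I, u i) = 0 := by
    rw [hP, sum_powersetCard_sum',
      Finset.sum_congr rfl (fun i (_ : i ∈ Finset.univ) => by
        rw [count_mem_powersetCard _ b hb1 (Finset.mem_univ i)]),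
      ← Finset.smul_sum, hsumu, smul_zero]
  have hC1R : (C1:ℝ) = (b:ℝ)*(P.card:ℝ)/(n:ℝ) := by
    field_simp
    linarith [hkey]
  have hQ : ∑ I ∈ P, ‖zsEst f x x' v' y lam b I - Gx‖^2
      ≤ (P.card:ℝ) * ((1-lam)^2 * ‖v' - Gx'‖^2) + (P.card:ℝ) * (2*L^2/(b:ℝ)*‖x-x'‖^2)
        + (P.card:ℝ) * (2*lam^2/(b:ℝ) * ((n:ℝ)⁻¹ * ∑ j, ‖c j‖^2)) := by
    have huw := hsumu_le.trans hsumw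
    calc ∑ I ∈ P, ‖zsEst f x x' v' y lam b I - Gx‖^2
        = ∑ I ∈ P, ‖(b:ℝ)⁻¹ • (∑ i ∈ I, u i) + Z‖^2 :=
          Finset.sum_congr rfl (fun I hI => by rw [hdecomp I hI])
      _ = ∑ I ∈ P, (((b:ℝ)⁻¹)^2 * ‖∑ i ∈ I, u i‖^2
            + 2*(b:ℝ)⁻¹*⟪∑ i ∈ I, u i, Z⟫ + ‖Z‖^2) := by
          refine Finset.sum_congr rfl fun I _ => ?_
          rw [norm_add_sq_real, norm_smul, real_inner_smul_left, Real.norm_eq_abs,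
            abs_of_nonneg (inv_nonneg.mpr hb0.le), mul_pow]
          ring
      _ = ((b:ℝ)⁻¹)^2 * ∑ I ∈ P, ‖∑ i ∈ I, u i‖^2
            + 2*(b:ℝ)⁻¹*⟪∑ I ∈ P, (∑ i ∈ I, u i), Z⟫ + (P.card:ℝ)*‖Z‖^2 := by
          rw [Finset.sum_add_distrib, Finset.sum_add_distrib, ← Finset.mul_sum,
            ← Finset.mul_sum, ← sum_inner, Finset.sum_const, nsmul_eq_mul]
      _ = ((b:ℝ)⁻¹)^2 * ∑ I ∈ P, ‖∑ i ∈ I, u i‖^2 + (P.card:ℝ)*‖Z‖^2 := by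
          rw [hsum0, inner_zero_left]
          ring
      _ ≤ ((b:ℝ)⁻¹)^2 * ((C1:ℝ) * ((n:ℝ)*(2*L^2*‖x-x'‖^2) + 2*lam^2 * ∑ j, ‖c j‖^2))
            + (P.card:ℝ)*‖Z‖^2 := by
          have h1 : ∑ I ∈ P, ‖∑ i ∈ I, u i‖^2
              ≤ (C1:ℝ) * ((n:ℝ)*(2*L^2*‖x-x'‖^2) + 2*lam^2 * ∑ j, ‖c j‖^2) :=
            hvar.trans (mul_le_mul_of_nonneg_left huw (Nat.cast_nonneg C1))
          have h2 : (0:ℝ) ≤ ((b:ℝ)⁻¹)^2 := by positivity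
          nlinarith [h1, h2]
      _ = (P.card:ℝ) * ((1-lam)^2 * ‖v' - Gx'‖^2) + (P.card:ℝ) * (2*L^2/(b:ℝ)*‖x-x'‖^2)
            + (P.card:ℝ) * (2*lam^2/(b:ℝ) * ((n:ℝ)⁻¹ * ∑ j, ‖c j‖^2)) := by
          rw [hC1R, hZsq]
          have he : (b:ℝ) * (b:ℝ)⁻¹ = 1 := mul_inv_cancel₀ hb0.ne'
          have hg : (n:ℝ) * (n:ℝ)⁻¹ = 1 := mul_inv_cancel₀ hn0.ne'
          linear_combination ((P.card:ℝ) * (b:ℝ)⁻¹ * (2*L^2*‖x-x'‖^2) * (n:ℝ) * (n:ℝ)⁻¹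
              + (P.card:ℝ) * (b:ℝ)⁻¹ * (n:ℝ)⁻¹ * (2*lam^2 * ∑ j, ‖c j‖^2)) * he
            + (P.card:ℝ) * (b:ℝ)⁻¹ * (2*L^2*‖x-x'‖^2) * hg
  have hyoung : ∀ j, ‖gradient (f j) x - y j‖^2
      ≤ (1+1/β)*(L^2*‖x-x'‖^2) + (1+β)*‖c j‖^2 := by
    intro j
    have hdec : gradient (f j) x - y j = (gradient (f j) x - gradient (f j) x') + c j := by
      simp only [hc]
      abel
    rw [hdec, norm_add_sq_real]
    have hip : ⟪gradient (f j) x - gradient (f j) x', c j⟫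
        ≤ ‖gradient (f j) x - gradient (f j) x'‖ * ‖c j‖ := real_inner_le_norm _ _
    have hp : ‖gradient (f j) x - gradient (f j) x'‖ ≤ L*‖x-x'‖ := hsmooth j x x'
    have hp2 : ‖gradient (f j) x - gradient (f j) x'‖^2 ≤ L^2*‖x-x'‖^2 := by
      have := pow_le_pow_left₀ (norm_nonneg _) hp 2
      calc ‖gradient (f j) x - gradient (f j) x'‖^2 ≤ (L*‖x-x'‖)^2 := this
        _ = L^2*‖x-x'‖^2 := by ring
    have h2 : 2*(‖gradient (f j) x - gradient (f j) x'‖ * ‖c j‖)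
        ≤ (1/β)*‖gradient (f j) x - gradient (f j) x'‖^2 + β*‖c j‖^2 := by
      have key : (1/β)*‖gradient (f j) x - gradient (f j) x'‖^2 + β*‖c j‖^2
          - 2*(‖gradient (f j) x - gradient (f j) x'‖ * ‖c j‖)
          = (1/β)*(‖gradient (f j) x - gradient (f j) x'‖ - β*‖c j‖)^2 := by
        field_simp
        ring
      have hnn : (0:ℝ) ≤ (1/β)*(‖gradient (f j) x - gradient (f j) x'‖ - β*‖c j‖)^2 := by
        positivity
      linarith
    have h3 : (1/β)*‖gradient (f j) x - gradient (f j) x'‖^2 ≤ (1/β)*(L^2*‖x-x'‖^2) :=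
      mul_le_mul_of_nonneg_left hp2 (by positivity)
    linarith
  have hCle : (P.card:ℝ) - (C1:ℝ) = (P.card:ℝ)*(1-(b:ℝ)/n) := by
    field_simp
    linarith [hkey]
  have hT : ∑ I ∈ P, ((n:ℝ)⁻¹ *
        ∑ j, ‖gradient (f j) x - (if j ∈ I then gradient (f j) x else y j)‖^2)
      ≤ (P.card:ℝ) * ((1-(b:ℝ)/n) * ((1+1/β)*(L^2*‖x-x'‖^2))
          + (1-(b:ℝ)/n) * ((1+β)*((n:ℝ)⁻¹ * ∑ j, ‖c j‖^2))) := by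
    have hity : ∀ (I : Finset (Fin n)) (j : Fin n),
        ‖gradient (f j) x - (if j ∈ I then gradient (f j) x else y j)‖^2
          = (if j ∈ I then (0:ℝ) else ‖gradient (f j) x - y j‖^2) := by
      intro I j
      by_cases h : j ∈ I <;> simp [h]
    have hcount : ∀ j : Fin n,
        ∑ I ∈ P, (if j ∈ I then (0:ℝ) else ‖gradient (f j) x - y j‖^2)
          = ((P.card:ℝ) - (C1:ℝ)) * ‖gradient (f j) x - y j‖^2 := by
      intro j
      have hfc : (P.filter (fun I => j ∈ I)).card = C1 := by
        rw [hP, count_mem_powersetCard _ b hb1 (Finset.mem_univ j), Finset.card_univ,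
          Fintype.card_fin, hC1]
      calc ∑ I ∈ P, (if j ∈ I then (0:ℝ) else ‖gradient (f j) x - y j‖^2)
          = ∑ I ∈ P, (‖gradient (f j) x - y j‖^2
              - if j ∈ I then ‖gradient (f j) x - y j‖^2 else 0) := by
            refine Finset.sum_congr rfl fun I _ => ?_
            by_cases h : j ∈ I <;> simp [h]
        _ = (P.card:ℝ)*‖gradient (f j) x - y j‖^2
              - ∑ I ∈ P, (if j ∈ I then ‖gradient (f j) x - y j‖^2 else 0) := by
            rw [Finset.sum_sub_distrib, Finset.sum_const, nsmul_eq_mul]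
        _ = (P.card:ℝ)*‖gradient (f j) x - y j‖^2 - (C1:ℝ)*‖gradient (f j) x - y j‖^2 := by
            rw [← Finset.sum_filter, Finset.sum_const, nsmul_eq_mul, hfc]
        _ = ((P.card:ℝ) - (C1:ℝ)) * ‖gradient (f j) x - y j‖^2 := by ring
    have hstep : ∑ I ∈ P, ((n:ℝ)⁻¹ *
          ∑ j, ‖gradient (f j) x - (if j ∈ I then gradient (f j) x else y j)‖^2)
        = ((P.card:ℝ) - (C1:ℝ)) * ((n:ℝ)⁻¹ * ∑ j, ‖gradient (f j) x - y j‖^2) := by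
      simp only [hity]
      rw [← Finset.mul_sum, Finset.sum_comm,
        Finset.sum_congr rfl (fun j (_ : j ∈ Finset.univ) => hcount j), ← Finset.mul_sum]
      ring
    rw [hstep]
    have hfac : (0:ℝ) ≤ (P.card:ℝ) - (C1:ℝ) := by
      rw [hCle]
      have hbn' : (b:ℝ) ≤ (n:ℝ) := by exact_mod_cast hbn
      have : (0:ℝ) ≤ 1 - (b:ℝ)/n := by
        rw [sub_nonneg, div_le_one hn0]
        exact hbn'
      exact mul_nonneg (Nat.cast_nonneg _) this
    have hsump : (n:ℝ)⁻¹ * ∑ j, ‖gradient (f j) x - y j‖^2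
        ≤ (1+1/β)*(L^2*‖x-x'‖^2) + (1+β)*((n:ℝ)⁻¹ * ∑ j, ‖c j‖^2) := by
      have h1 : ∑ j, ‖gradient (f j) x - y j‖^2
          ≤ ∑ j : Fin n, ((1+1/β)*(L^2*‖x-x'‖^2) + (1+β)*‖c j‖^2) :=
        Finset.sum_le_sum (fun j _ => hyoung j)
      have h2 : ∑ j : Fin n, ((1+1/β)*(L^2*‖x-x'‖^2) + (1+β)*‖c j‖^2)
          = (n:ℝ)*((1+1/β)*(L^2*‖x-x'‖^2)) + (1+β)*∑ j, ‖c j‖^2 := by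
        rw [Finset.sum_add_distrib, Finset.sum_const, Finset.card_univ, Fintype.card_fin,
          nsmul_eq_mul, ← Finset.mul_sum]
      calc (n:ℝ)⁻¹ * ∑ j, ‖gradient (f j) x - y j‖^2
          ≤ (n:ℝ)⁻¹ * ((n:ℝ)*((1+1/β)*(L^2*‖x-x'‖^2)) + (1+β)*∑ j, ‖c j‖^2) := by
            rw [← h2]
            exact mul_le_mul_of_nonneg_left h1 (by positivity)
        _ = (1+1/β)*(L^2*‖x-x'‖^2) + (1+β)*((n:ℝ)⁻¹ * ∑ j, ‖c j‖^2) := by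
            field_simp
    calc ((P.card:ℝ) - (C1:ℝ)) * ((n:ℝ)⁻¹ * ∑ j, ‖gradient (f j) x - y j‖^2)
        ≤ ((P.card:ℝ) - (C1:ℝ))
            * ((1+1/β)*(L^2*‖x-x'‖^2) + (1+β)*((n:ℝ)⁻¹ * ∑ j, ‖c j‖^2)) :=
          mul_le_mul_of_nonneg_left hsump hfac
      _ = (P.card:ℝ) * ((1-(b:ℝ)/n) * ((1+1/β)*(L^2*‖x-x'‖^2))
            + (1-(b:ℝ)/n) * ((1+β)*((n:ℝ)⁻¹ * ∑ j, ‖c j‖^2))) := by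
          rw [hCle]
          ring
  have hpoint : ∀ I ∈ P,
      avgF f (x - η • zsEst f x x' v' y lam b I) - fstar
        + (γ - η / 2) * ‖zsEst f x x' v' y lam b I - Gx‖ ^ 2
        + (1 / (2 * η) - L / 2) * ‖(x - η • zsEst f x x' v' y lam b I) - x‖ ^ 2
        + α * ((n : ℝ)⁻¹ *
            ∑ j, ‖gradient (f j) x - (if j ∈ I then gradient (f j) x else y j)‖ ^ 2)
      ≤ (avgF f x - fstar - η/2 * ‖Gx‖^2) + γ * ‖zsEst f x x' v' y lam b I - Gx‖^2
        + α * ((n : ℝ)⁻¹ *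
            ∑ j, ‖gradient (f j) x - (if j ∈ I then gradient (f j) x else y j)‖ ^ 2) := by
    intro I _
    set v := zsEst f x x' v' y lam b I with hv
    have hdesc := descent_lemma (avgF f) (diff_avgF f hdiff) hL0
      (lip_avgF hn hL0 f hdiff hsmooth) x (-(η • v))
    rw [← sub_eq_add_neg] at hdesc
    have hi1 : ⟪Gx, -(η • v)⟫ = -(η * ⟪Gx, v⟫) := by
      rw [inner_neg_right, real_inner_smul_right]
    have hi2 : ‖-(η • v)‖^2 = η^2 * ‖v‖^2 := by
      rw [norm_neg, norm_smul, Real.norm_eq_abs, mul_pow, sq_abs]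
    have hipq : 2*⟪Gx, v⟫ = ‖Gx‖^2 + ‖v‖^2 - ‖v - Gx‖^2 := by
      have h := norm_sub_sq_real v Gx
      have hcm := real_inner_comm v Gx
      linarith
    have hnx : ‖(x - η • v) - x‖^2 = η^2*‖v‖^2 := by
      rw [sub_sub_cancel_left, norm_neg, norm_smul, Real.norm_eq_abs, mul_pow, sq_abs]
    rw [hi1, hi2] at hdesc
    rw [hnx]
    have hexp1 : (γ - η/2) * ‖v - Gx‖^2 = γ*‖v - Gx‖^2 - (η/2)*‖v - Gx‖^2 := by ring
    have hexp2 : (1/(2*η) - L/2) * (η^2*‖v‖^2) = (η/2)*‖v‖^2 - (L/2)*(η^2*‖v‖^2) := by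
      field_simp
    have hip' : -(η * ⟪Gx, v⟫)
        = -((η/2)*‖Gx‖^2) - (η/2)*‖v‖^2 + (η/2)*‖v - Gx‖^2 := by
      linear_combination (-η/2) * hipq
    linarith [hdesc, hexp1, hexp2, hip']
  rw [div_le_iff₀ hNpos]
  have hcj : ∀ j : Fin n, gradient (f j) x' - y j = c j := fun j => rfl
  simp only [hcj]
  calc ∑ I ∈ P, (avgF f (x - η • zsEst f x x' v' y lam b I) - fstar
        + (γ - η / 2) * ‖zsEst f x x' v' y lam b I - Gx‖ ^ 2
        + (1 / (2 * η) - L / 2) * ‖(x - η • zsEst f x x' v' y lam b I) - x‖ ^ 2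
        + α * ((n : ℝ)⁻¹ *
            ∑ j, ‖gradient (f j) x - (if j ∈ I then gradient (f j) x else y j)‖ ^ 2))
      ≤ ∑ I ∈ P, ((avgF f x - fstar - η/2 * ‖Gx‖^2)
          + γ * ‖zsEst f x x' v' y lam b I - Gx‖^2
          + α * ((n : ℝ)⁻¹ *
            ∑ j, ‖gradient (f j) x - (if j ∈ I then gradient (f j) x else y j)‖ ^ 2)) :=
        Finset.sum_le_sum hpoint
    _ = (P.card:ℝ)*(avgF f x - fstar - η/2 * ‖Gx‖^2)
          + γ * ∑ I ∈ P, ‖zsEst f x x' v' y lam b I - Gx‖^2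
          + α * ∑ I ∈ P, ((n : ℝ)⁻¹ *
            ∑ j, ‖gradient (f j) x - (if j ∈ I then gradient (f j) x else y j)‖ ^ 2) := by
        rw [Finset.sum_add_distrib, Finset.sum_add_distrib, Finset.sum_const, nsmul_eq_mul,
          ← Finset.mul_sum, ← Finset.mul_sum]
    _ ≤ (P.card:ℝ)*(avgF f x - fstar - η/2 * ‖Gx‖^2)
          + γ * ((P.card:ℝ) * ((1-lam)^2 * ‖v' - Gx'‖^2)
              + (P.card:ℝ) * (2*L^2/(b:ℝ)*‖x-x'‖^2)
              + (P.card:ℝ) * (2*lam^2/(b:ℝ) * ((n:ℝ)⁻¹ * ∑ j, ‖c j‖^2)))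
          + α * ((P.card:ℝ) * ((1-(b:ℝ)/n) * ((1+1/β)*(L^2*‖x-x'‖^2))
              + (1-(b:ℝ)/n) * ((1+β)*((n:ℝ)⁻¹ * ∑ j, ‖c j‖^2)))) := by
        have g1 := mul_le_mul_of_nonneg_left hQ hγ
        have g2 := mul_le_mul_of_nonneg_left hT hα
        linarith
    _ = (avgF f x - fstar - η / 2 * ‖Gx‖ ^ 2
          + γ * (1 - lam) ^ 2 * ‖v' - Gx'‖ ^ 2
          + (2 * γ * L ^ 2 / (b : ℝ)
              + α * (1 - (b : ℝ) / n) * (1 + 1 / β) * L ^ 2) * ‖x - x'‖ ^ 2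
          + (2 * γ * lam ^ 2 / (b : ℝ)
              + α * (1 - (b : ℝ) / n) * (1 + β)) *
              ((n : ℝ)⁻¹ * ∑ j, ‖c j‖ ^ 2)) * (P.card:ℝ) := by
        ring
end
end

section
/- (Tracking-error recursion for D-ZeroSARAH.) Fix x, x' ∈ ℝ^d, vectors y_{i,j} ∈ ℝ^d (1 ≤ i ≤ n, 1 ≤ j ≤ m), 1 ≤ s ≤ n, 1 ≤ b ≤ m and β > 0. For (S,{I_i}), define y_{i,j}⁺ := ∇f_{i,j}(x) if i ∈ S and j ∈ I_i, and y_{i,j}⁺ := y_{i,j} otherwise. Then E_{S,{I_i}}[(1/(nm)) ∑_{i,j} ‖∇f_{i,j}(x) − y_{i,j}⁺‖²] ≤ (1 − sb/(nm))(1 + β) · (1/(nm)) ∑_{i,j} ‖∇f_{i,j}(x') − y_{i,j}‖² + (1 − sb/(nm))(1 + 1/β) · L² ‖x − x'‖². -/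
noncomputable section

open Finset

/-- The global average function `f(x) = (1/(nm)) ∑ᵢ∑ⱼ f_{i,j}(x)`. -/
noncomputable def dAvgF {d n m : ℕ}
    (f : Fin n → Fin m → EuclideanSpace ℝ (Fin d) → ℝ) :
    EuclideanSpace ℝ (Fin d) → ℝ :=
  fun z => ((n : ℝ) * (m : ℝ))⁻¹ * ∑ i, ∑ j, f i j z

/-- Expectation over a uniformly random size-`s` subset `S ⊆ {1,…,n}` together with,
independently for each client, a uniformly random size-`b` subset of `{1,…,m}`
(real-valued functional). -/
noncomputable def dExp (n m s b : ℕ)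
    (g : Finset (Fin n) → (Fin n → Finset (Fin m)) → ℝ) : ℝ :=
  (∑ S ∈ Finset.powersetCard s (Finset.univ : Finset (Fin n)),
    ∑ σ ∈ Finset.univ.filter
      (fun σ : Fin n → Finset (Fin m) => ∀ i, (σ i).card = b), g S σ) /
  (((Finset.powersetCard s (Finset.univ : Finset (Fin n))).card : ℝ) *
    ((Finset.univ.filter
      (fun σ : Fin n → Finset (Fin m) => ∀ i, (σ i).card = b)).card : ℝ))

/-- The D-ZeroSARAH gradient estimator. -/
noncomputable def dEst {d n m : ℕ}
    (f : Fin n → Fin m → EuclideanSpace ℝ (Fin d) → ℝ)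
    (x x' v' : EuclideanSpace ℝ (Fin d))
    (y : Fin n → Fin m → EuclideanSpace ℝ (Fin d))
    (lam : ℝ) (s b : ℕ)
    (S : Finset (Fin n)) (σ : Fin n → Finset (Fin m)) : EuclideanSpace ℝ (Fin d) :=
  ((s : ℝ) * (b : ℝ))⁻¹ •
      ∑ i ∈ S, ∑ j ∈ σ i, (gradient (f i j) x - gradient (f i j) x')
    + (1 - lam) • v'
    + lam • (((s : ℝ) * (b : ℝ))⁻¹ •
          ∑ i ∈ S, ∑ j ∈ σ i, (gradient (f i j) x' - y i j)
        + ((n : ℝ) * (m : ℝ))⁻¹ • ∑ i, ∑ j, y i j)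


lemma card_filter_mem_powersetCard {α : Type*} [Fintype α] [DecidableEq α] (a : α) (k : ℕ)
    (hk : 1 ≤ k) :
    ((Finset.powersetCard k (Finset.univ : Finset α)).filter (fun S => a ∈ S)).card
      = (Fintype.card α - 1).choose (k - 1) := by
  have : ((Finset.powersetCard k (Finset.univ : Finset α)).filter (fun S => a ∈ S)).card
      = (Finset.powersetCard (k-1) (Finset.univ.erase a)).card := by
    refine Finset.card_bij' (fun S _ => S.erase a) (fun T _ => insert a T) ?_ ?_ ?_ ?_
    · intro S hS
      simp only [mem_filter, mem_powersetCard] at hS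
      simp only [mem_powersetCard]
      exact ⟨Finset.erase_subset_erase a hS.1.1, by rw [Finset.card_erase_of_mem hS.2, hS.1.2]⟩
    · intro T hT
      simp only [mem_powersetCard] at hT
      have haT : a ∉ T := fun h => (Finset.mem_erase.1 (hT.1 h)).1 rfl
      simp only [mem_filter, mem_powersetCard]
      refine ⟨⟨Finset.subset_univ _, ?_⟩, Finset.mem_insert_self _ _⟩
      rw [Finset.card_insert_of_notMem haT, hT.2]
      omega
    · intro S hS
      simp only [mem_filter] at hS
      exact Finset.insert_erase hS.2
    · intro T hT
      simp only [mem_powersetCard] at hT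
      exact Finset.erase_insert (fun h => (Finset.mem_erase.1 (hT.1 h)).1 rfl)
  rw [this, Finset.card_powersetCard, Finset.card_erase_of_mem (Finset.mem_univ a),
    Finset.card_univ]

lemma filter_card_eq_piFinset (n m b : ℕ) :
    (Finset.univ.filter (fun σ : Fin n → Finset (Fin m) => ∀ i, (σ i).card = b))
      = Fintype.piFinset (fun _ : Fin n => Finset.powersetCard b (Finset.univ : Finset (Fin m))) := by
  ext σ
  simp [Fintype.mem_piFinset, Finset.mem_powersetCard, Finset.subset_univ]

lemma sum_ind_sigma (n m b : ℕ) (hb1 : 1 ≤ b) (i : Fin n) (j : Fin m) :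
    ∑ σ ∈ Finset.univ.filter (fun σ : Fin n → Finset (Fin m) => ∀ i, (σ i).card = b),
        (if j ∈ σ i then (1:ℝ) else 0)
      = ((m-1).choose (b-1) : ℝ) * ((m.choose b : ℝ)) ^ (n - 1) := by
  rw [filter_card_eq_piFinset]
  have key : ∀ σ : Fin n → Finset (Fin m), (if j ∈ σ i then (1:ℝ) else 0)
      = ∏ k, (if i = k then (if j ∈ σ k then (1:ℝ) else 0) else 1) := by
    intro σ
    rw [Finset.prod_ite_eq]
    simp
  simp_rw [key]
  rw [Finset.sum_prod_piFinset (Finset.powersetCard b (Finset.univ : Finset (Fin m)))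
    (fun k T => if i = k then (if j ∈ T then (1:ℝ) else 0) else 1)]
  have hval : ∀ k : Fin n,
      (∑ T ∈ Finset.powersetCard b (Finset.univ : Finset (Fin m)),
        (if i = k then (if j ∈ T then (1:ℝ) else 0) else 1))
      = if i = k then ((m-1).choose (b-1) : ℝ) else (m.choose b : ℝ) := by
    intro k
    by_cases h : i = k
    · simp only [h, if_true]
      rw [Finset.sum_boole]
      have := card_filter_mem_powersetCard j b hb1
      simp only [Fintype.card_fin] at this
      exact_mod_cast this
    · simp only [h, if_false]
      rw [Finset.sum_const, Finset.card_powersetCard, Finset.card_univ, Fintype.card_fin]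
      simp
  simp_rw [hval]
  rw [← Finset.mul_prod_erase Finset.univ _ (Finset.mem_univ i)]
  simp only [if_pos rfl]
  congr 1
  rw [Finset.prod_congr rfl (fun k hk => by rw [if_neg (Finset.ne_of_mem_erase hk ∘ Eq.symm)])]
  rw [Finset.prod_const, Finset.card_erase_of_mem (Finset.mem_univ i), Finset.card_univ,
    Fintype.card_fin]

lemma sum_ind_S (n s : ℕ) (hs1 : 1 ≤ s) (i : Fin n) :
    ∑ S ∈ Finset.powersetCard s (Finset.univ : Finset (Fin n)), (if i ∈ S then (1:ℝ) else 0)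
      = ((n-1).choose (s-1) : ℝ) := by
  rw [Finset.sum_boole]
  have := card_filter_mem_powersetCard i s hs1
  simp only [Fintype.card_fin] at this
  exact_mod_cast this

lemma young_ineq {E : Type*} [NormedAddCommGroup E] [InnerProductSpace ℝ E]
    (u v : E) (β : ℝ) (hβ : 0 < β) :
    ‖u + v‖ ^ 2 ≤ (1 + β) * ‖u‖ ^ 2 + (1 + 1/β) * ‖v‖ ^ 2 := by
  have h1 : ‖u + v‖ ^ 2 = ‖u‖ ^ 2 + 2 * inner ℝ u v + ‖v‖ ^ 2 := norm_add_sq_real u v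
  have h2 : (inner ℝ u v : ℝ) ≤ ‖u‖ * ‖v‖ := real_inner_le_norm u v
  have h3 : 0 ≤ (β * ‖u‖ - ‖v‖) ^ 2 := sq_nonneg _
  have h4 : (0:ℝ) < β := hβ
  rw [h1]
  have h5 : 1/β * β = 1 := by field_simp
  nlinarith [norm_nonneg u, norm_nonneg v, mul_pos (one_div_pos.2 h4) h4]

lemma ratio_lemma (n m s b : ℕ) (hn : 1 ≤ n) (hm : 1 ≤ m) (hs1 : 1 ≤ s) (hsn : s ≤ n)
    (hb1 : 1 ≤ b) (hbm : b ≤ m) :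
    ((n.choose s : ℝ) * (m.choose b : ℝ)^n - ((n-1).choose (s-1) : ℝ) *
        (((m-1).choose (b-1) : ℝ) * (m.choose b : ℝ)^(n-1)))
      / ((n.choose s : ℝ) * (m.choose b : ℝ)^n)
      = 1 - (s : ℝ) * (b : ℝ) / ((n : ℝ) * (m : ℝ)) := by
  have hNpos : (0:ℝ) < (n.choose s : ℝ) := by exact_mod_cast Nat.choose_pos hsn
  have hCbpos : (0:ℝ) < (m.choose b : ℝ) := by exact_mod_cast Nat.choose_pos hbm
  have hn0 : (0:ℝ) < (n:ℝ) := by exact_mod_cast hn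
  have hm0 : (0:ℝ) < (m:ℝ) := by exact_mod_cast hm
  have e1 : (n:ℝ) * ((n-1).choose (s-1) : ℝ) = (s:ℝ) * (n.choose s : ℝ) := by
    have := Nat.add_one_mul_choose_eq (n-1) (s-1)
    have hn' : n - 1 + 1 = n := by omega
    have hs' : s - 1 + 1 = s := by omega
    rw [hn', hs'] at this
    exact_mod_cast this.trans (Nat.mul_comm _ _)
  have e2 : (m:ℝ) * (((m-1).choose (b-1)) : ℝ) = (b:ℝ) * (m.choose b : ℝ) := by
    have := Nat.add_one_mul_choose_eq (m-1) (b-1)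
    have hm' : m - 1 + 1 = m := by omega
    have hb' : b - 1 + 1 = b := by omega
    rw [hm', hb'] at this
    exact_mod_cast this.trans (Nat.mul_comm _ _)
  have hpow : (m.choose b : ℝ)^n = (m.choose b : ℝ)^(n-1) * (m.choose b : ℝ) := by
    rw [← pow_succ]
    congr 1
    omega
  have key : ((n:ℝ))*(m:ℝ)*(((n-1).choose (s-1) : ℝ)*((((m-1).choose (b-1)) : ℝ)*(m.choose b : ℝ)^(n-1)))
      = (s:ℝ)*(b:ℝ)*((n.choose s : ℝ)*((m.choose b : ℝ)^(n-1)*(m.choose b : ℝ))) := by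
    linear_combination ((m.choose b : ℝ)^(n-1)*(m:ℝ)*(((m-1).choose (b-1)):ℝ))*e1
      + ((m.choose b : ℝ)^(n-1)*(s:ℝ)*(n.choose s : ℝ))*e2
  rw [hpow]
  have hden : (n.choose s : ℝ)*((m.choose b : ℝ)^(n-1)*(m.choose b : ℝ)) ≠ 0 := by positivity
  field_simp
  linear_combination (-((m:ℝ) * (((m-1).choose (b-1)) : ℝ))) * e1 - ((s:ℝ) * (n.choose s : ℝ)) * e2

lemma dExp_value {d n m : ℕ} (hn : 1 ≤ n) (hm : 1 ≤ m)
    (s b : ℕ) (hs1 : 1 ≤ s) (hsn : s ≤ n) (hb1 : 1 ≤ b) (hbm : b ≤ m)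
    (w z : Fin n → Fin m → EuclideanSpace ℝ (Fin d)) :
    dExp n m s b (fun S σ => ((n : ℝ) * (m : ℝ))⁻¹ *
        ∑ i, ∑ j, ‖w i j - (if i ∈ S ∧ j ∈ σ i then w i j else z i j)‖ ^ 2)
      = (1 - (s : ℝ) * (b : ℝ) / ((n : ℝ) * (m : ℝ))) *
          (((n : ℝ) * (m : ℝ))⁻¹ * ∑ i, ∑ j, ‖w i j - z i j‖ ^ 2) := by
  classical
  set c : Fin n → Fin m → ℝ := fun i j => ‖w i j - z i j‖^2 with hc
  set K : ℝ := ((n : ℝ) * (m : ℝ))⁻¹ with hK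
  set P := Finset.powersetCard s (Finset.univ : Finset (Fin n)) with hPdef
  set F := Finset.univ.filter (fun σ : Fin n → Finset (Fin m) => ∀ i, (σ i).card = b) with hFdef
  have hPcard : (P.card : ℝ) = (n.choose s : ℝ) := by
    rw [hPdef, Finset.card_powersetCard, Finset.card_univ, Fintype.card_fin]
  have hFcard : (F.card : ℝ) = (m.choose b : ℝ) ^ n := by
    rw [hFdef, filter_card_eq_piFinset, Fintype.card_piFinset]
    push_cast
    simp [Finset.card_powersetCard]
  have hterm : ∀ (S : Finset (Fin n)) (σ : Fin n → Finset (Fin m)) (i : Fin n) (j : Fin m),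
      ‖w i j - (if i ∈ S ∧ j ∈ σ i then w i j else z i j)‖ ^ 2
      = c i j - (if i ∈ S then (1:ℝ) else 0) * ((if j ∈ σ i then (1:ℝ) else 0) * c i j) := by
    intro S σ i j
    by_cases h1 : i ∈ S <;> by_cases h2 : j ∈ σ i <;> simp [h1, h2, hc]
  have hswap : ∑ S ∈ P, ∑ σ ∈ F, ∑ i,
        (if i ∈ S then (1:ℝ) else 0) * ∑ j, ((if j ∈ σ i then (1:ℝ) else 0) * c i j)
      = ((n-1).choose (s-1) : ℝ) * ((((m-1).choose (b-1)) : ℝ) * (m.choose b : ℝ)^(n-1))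
          * ∑ i, ∑ j, c i j := by
    simp_rw [Finset.mul_sum]
    calc ∑ S ∈ P, ∑ σ ∈ F, ∑ i, ∑ j,
          (if i ∈ S then (1:ℝ) else 0) * ((if j ∈ σ i then (1:ℝ) else 0) * c i j)
        = ∑ S ∈ P, ∑ i, ∑ j, ∑ σ ∈ F,
          (if i ∈ S then (1:ℝ) else 0) * ((if j ∈ σ i then (1:ℝ) else 0) * c i j) := by
          refine Finset.sum_congr rfl fun S _ => ?_
          rw [Finset.sum_comm]
          exact Finset.sum_congr rfl fun i _ => Finset.sum_comm
      _ = ∑ i, ∑ j, ∑ S ∈ P, ∑ σ ∈ F,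
          (if i ∈ S then (1:ℝ) else 0) * ((if j ∈ σ i then (1:ℝ) else 0) * c i j) := by
          rw [Finset.sum_comm]
          exact Finset.sum_congr rfl fun i _ => Finset.sum_comm
      _ = ∑ i, ∑ j, ((n-1).choose (s-1) : ℝ)
            * ((((m-1).choose (b-1)) : ℝ) * (m.choose b : ℝ)^(n-1) * c i j) := by
          refine Finset.sum_congr rfl fun i _ => Finset.sum_congr rfl fun j _ => ?_
          rw [← Finset.sum_mul_sum]
          rw [sum_ind_S n s hs1 i]
          congr 1
          rw [← Finset.sum_mul, sum_ind_sigma n m b hb1 i j]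
      _ = ∑ i, ∑ j, ((n-1).choose (s-1) : ℝ)
            * ((((m-1).choose (b-1)) : ℝ) * (m.choose b : ℝ)^(n-1)) * c i j := by
          exact Finset.sum_congr rfl fun i _ => Finset.sum_congr rfl fun j _ => by ring
  have hnum : ∑ S ∈ P, ∑ σ ∈ F,
        (K * ∑ i, ∑ j, ‖w i j - (if i ∈ S ∧ j ∈ σ i then w i j else z i j)‖ ^ 2)
      = K * (((P.card : ℝ) * (F.card : ℝ)
          - ((n-1).choose (s-1) : ℝ) * ((((m-1).choose (b-1)) : ℝ) * (m.choose b : ℝ)^(n-1)))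
          * ∑ i, ∑ j, c i j) := by
    simp_rw [hterm, Finset.sum_sub_distrib, mul_sub, Finset.sum_sub_distrib, ← Finset.mul_sum]
    rw [hswap]
    simp only [Finset.sum_const, nsmul_eq_mul]
    ring
  rw [dExp, hnum]
  rw [hPcard, hFcard]
  rw [mul_div_assoc, mul_div_assoc]
  rw [← ratio_lemma n m s b hn hm hs1 hsn hb1 hbm]
  ring

/-- Tracking-error recursion for D-ZeroSARAH. -/
theorem dzerosarah_tracking_bound {d n m : ℕ} (hd : 1 ≤ d) (hn : 1 ≤ n) (hm : 1 ≤ m)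
    (L : ℝ) (hL : 0 < L)
    (f : Fin n → Fin m → EuclideanSpace ℝ (Fin d) → ℝ)
    (hdiff : ∀ i j, Differentiable ℝ (f i j))
    (hsmooth : ∀ i j (x y : EuclideanSpace ℝ (Fin d)),
      ‖gradient (f i j) x - gradient (f i j) y‖ ≤ L * ‖x - y‖)
    (x x' : EuclideanSpace ℝ (Fin d))
    (y : Fin n → Fin m → EuclideanSpace ℝ (Fin d))
    (s b : ℕ) (hs1 : 1 ≤ s) (hsn : s ≤ n) (hb1 : 1 ≤ b) (hbm : b ≤ m)
    (β : ℝ) (hβ : 0 < β) :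
    dExp n m s b (fun S σ => ((n : ℝ) * (m : ℝ))⁻¹ *
        ∑ i, ∑ j, ‖gradient (f i j) x -
          (if i ∈ S ∧ j ∈ σ i then gradient (f i j) x else y i j)‖ ^ 2)
      ≤ (1 - (s : ℝ) * (b : ℝ) / ((n : ℝ) * (m : ℝ))) * (1 + β) *
          (((n : ℝ) * (m : ℝ))⁻¹ * ∑ i, ∑ j, ‖gradient (f i j) x' - y i j‖ ^ 2)
        + (1 - (s : ℝ) * (b : ℝ) / ((n : ℝ) * (m : ℝ))) * (1 + 1 / β) * L ^ 2
            * ‖x - x'‖ ^ 2 := by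
  classical
  have hn0 : (0:ℝ) < (n:ℝ) := by exact_mod_cast hn
  have hm0 : (0:ℝ) < (m:ℝ) := by exact_mod_cast hm
  rw [dExp_value hn hm s b hs1 hsn hb1 hbm (fun i j => gradient (f i j) x) y]
  set p : ℝ := (s : ℝ) * (b : ℝ) / ((n : ℝ) * (m : ℝ)) with hp
  set K : ℝ := ((n : ℝ) * (m : ℝ))⁻¹ with hK
  set D : ℝ := ‖x - x'‖ ^ 2 with hD
  have h1p : 0 ≤ 1 - p := by
    rw [hp, sub_nonneg, div_le_one (by positivity)]
    have : (s:ℝ) ≤ (n:ℝ) := by exact_mod_cast hsn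
    have hb' : (b:ℝ) ≤ (m:ℝ) := by exact_mod_cast hbm
    have hs0 : (0:ℝ) ≤ (s:ℝ) := by positivity
    nlinarith
  have hbound : ∀ (i : Fin n) (j : Fin m),
      ‖gradient (f i j) x - y i j‖ ^ 2
        ≤ (1 + β) * ‖gradient (f i j) x' - y i j‖ ^ 2 + (1 + 1/β) * (L^2 * D) := by
    intro i j
    have heq : gradient (f i j) x - y i j
        = (gradient (f i j) x' - y i j) + (gradient (f i j) x - gradient (f i j) x') := by
      abel
    rw [heq]
    refine (young_ineq _ _ β hβ).trans ?_
    have hv : ‖gradient (f i j) x - gradient (f i j) x'‖ ^ 2 ≤ L ^ 2 * D := by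
      have h := hsmooth i j x x'
      have := norm_nonneg (gradient (f i j) x - gradient (f i j) x')
      rw [hD]
      nlinarith [norm_nonneg (x - x')]
    have h1b : (0:ℝ) ≤ 1 + 1/β := by positivity
    have := mul_le_mul_of_nonneg_left hv h1b
    have ha : (0:ℝ) ≤ ‖gradient (f i j) x' - y i j‖ ^ 2 := by positivity
    nlinarith
  have hsum : ∑ i, ∑ j, ‖gradient (f i j) x - y i j‖ ^ 2
      ≤ (1 + β) * (∑ i, ∑ j, ‖gradient (f i j) x' - y i j‖ ^ 2)
        + (n:ℝ) * (m:ℝ) * ((1 + 1/β) * (L^2 * D)) := by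
    calc ∑ i, ∑ j, ‖gradient (f i j) x - y i j‖ ^ 2
        ≤ ∑ i, ∑ j, ((1 + β) * ‖gradient (f i j) x' - y i j‖ ^ 2 + (1 + 1/β) * (L^2 * D)) := by
          exact Finset.sum_le_sum fun i _ => Finset.sum_le_sum fun j _ => hbound i j
      _ = (1 + β) * (∑ i, ∑ j, ‖gradient (f i j) x' - y i j‖ ^ 2)
            + (n:ℝ) * (m:ℝ) * ((1 + 1/β) * (L^2 * D)) := by
          simp only [Finset.sum_add_distrib, Finset.sum_const, Finset.card_univ,
            Fintype.card_fin, nsmul_eq_mul, ← Finset.mul_sum]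
          ring
  have hK0 : 0 ≤ K := by positivity
  have hKnm : K * ((n:ℝ) * (m:ℝ)) = 1 := by
    rw [hK]
    field_simp
  calc (1 - p) * (K * ∑ i, ∑ j, ‖gradient (f i j) x - y i j‖ ^ 2)
      ≤ (1 - p) * (K * ((1 + β) * (∑ i, ∑ j, ‖gradient (f i j) x' - y i j‖ ^ 2))
          + K * ((n:ℝ) * (m:ℝ) * ((1 + 1/β) * (L^2 * D)))) := by
        have := mul_le_mul_of_nonneg_left hsum hK0
        rw [mul_add] at this
        exact mul_le_mul_of_nonneg_left this h1p
    _ = (1 - p) * (1 + β) * (K * ∑ i, ∑ j, ‖gradient (f i j) x' - y i j‖ ^ 2)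
          + (1 - p) * (1 + 1/β) * L ^ 2 * D := by
        have : K * ((n:ℝ) * (m:ℝ) * ((1 + 1/β) * (L^2 * D)))
            = (1 + 1/β) * (L^2 * D) := by
          rw [← mul_assoc, hKnm, one_mul]
        rw [this]
        ring
end
end
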